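/- Let p be an odd prime, r = (p−1)/2, and C = (2cos(2πkj/p))_{k,j=1,...,r}. If det(C_{J×K}) = 0 for some J, K ⊆ {1,...,r} of equal size, then the minor of the p×p complex Fourier matrix F = (exp(2πi·kj/p))_{k,j=−r,...,r} with rows J ∪ (−J) and columns K ∪ (−K) also vanishes. Consequently (by Chebotarev), all minors of C are nonzero. -/

import Mathlib

open Complex Polynomial

private lemma pow_eq_pow_of_modEq_aux {M : Type*} [Monoid M] {z : M} {p : ℕ} (hz : z ^ p = 1)
    {n m : ℕ} (hle : n ≤ m) (h : n ≡ m [MOD p]) : z ^ n = z ^ m := by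
  obtain ⟨t, ht⟩ := (Nat.modEq_iff_dvd' hle).mp h
  have hm : m = n + p * t := by omega
  rw [hm, pow_add, pow_mul, hz, one_pow, mul_one]

private lemma pow_eq_pow_of_modEq_cyc {M : Type*} [Monoid M] {z : M} {p : ℕ} (hz : z ^ p = 1)
    {n m : ℕ} (h : n ≡ m [MOD p]) : z ^ n = z ^ m := by
  rcases le_total n m with hle | hle
  · exact pow_eq_pow_of_modEq_aux hz hle h
  · exact (pow_eq_pow_of_modEq_aux hz hle h.symm).symm

private lemma dot_monomial {R : Type*} [CommRing R] (a : R) (n : ℕ) :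
    Polynomial.X * Polynomial.derivative (Polynomial.C a * Polynomial.X ^ n)
      = Polynomial.C (a * (n : R)) * Polynomial.X ^ n := by
  rcases n with _ | n
  · simp
  · rw [Polynomial.derivative_C_mul, Polynomial.derivative_X_pow]
    have : (n + 1 : ℕ) - 1 = n := rfl
    rw [this, pow_succ, map_mul]
    ring

private lemma dot_iter_sum {R : Type*} [CommRing R] {ι : Type*} (s : Finset ι) (c : ι → R)
    (d : ι → ℕ) (t : ℕ) :
    (fun f => Polynomial.X * Polynomial.derivative f)^[t]
        (∑ j ∈ s, Polynomial.C (c j) * Polynomial.X ^ (d j))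
      = ∑ j ∈ s, Polynomial.C (c j * (d j : R) ^ t) * Polynomial.X ^ (d j) := by
  induction t with
  | zero => simp
  | succ t ih =>
    rw [Function.iterate_succ_apply', ih]
    rw [map_sum Polynomial.derivative _ s, Finset.mul_sum]
    refine Finset.sum_congr rfl fun j _ => ?_
    rw [dot_monomial, mul_assoc, ← pow_succ]

private lemma dot_iter_dvd {R : Type*} [CommRing R] (f : Polynomial R) (m : ℕ) :
    ∀ t, t ≤ m → ((Polynomial.X - 1) ^ m ∣ f) →
    (Polynomial.X - 1 : Polynomial R) ^ (m - t) ∣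
      (fun g => Polynomial.X * Polynomial.derivative g)^[t] f := by
  intro t
  induction t with
  | zero => intro _ h; simpa using h
  | succ t ih =>
    intro ht h
    rw [Function.iterate_succ_apply']
    obtain ⟨g, hg⟩ := ih (by omega) h
    rw [hg]
    have hmt : m - t = (m - (t + 1)) + 1 := by omega
    rw [hmt, Polynomial.derivative_mul, Polynomial.derivative_pow]
    apply Dvd.dvd.mul_left
    apply dvd_add
    · have h1 : (m - (t+1)) + 1 - 1 = m - (t+1) := by omega
      rw [h1]
      exact (((dvd_refl _).mul_left _).mul_right _).mul_right _
    · exact (pow_dvd_pow _ (Nat.le_succ _)).mul_right _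

private theorem cheb_minor_ne_zero (p : ℕ) (hp : p.Prime) (hodd : Odd p)
    {ι : Type} [Fintype ι] [DecidableEq ι] (a b : ι → ℤ)
    (ha : Function.Injective fun i => ((a i : ZMod p)))
    (hb : Function.Injective fun j => ((b j : ZMod p))) :
    Matrix.det (fun i j : ι =>
      Complex.exp (2 * Real.pi * Complex.I * (a i) * (b j) / p)) ≠ 0 := by
  haveI : Fact p.Prime := ⟨hp⟩
  have hp0 : 0 < p := hp.pos
  have hp1 : 1 < p := hp.one_lt
  have hpZ : ((p : ℤ)) ≠ 0 := by exact_mod_cast hp0.ne'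
  set ζ : ℂ := Complex.exp (2 * Real.pi * Complex.I / p) with hζdef
  have hζ : IsPrimitiveRoot ζ p := Complex.isPrimitiveRoot_exp p hp0.ne'
  have hζ0 : ζ ≠ 0 := Complex.exp_ne_zero _
  -- reduced exponents
  set E : ℤ → ℕ := fun x => (x % (p : ℤ)).toNat with hEdef
  have hEcast : ∀ x : ℤ, ((E x : ℤ)) = x % (p : ℤ) :=
    fun x => Int.toNat_of_nonneg (Int.emod_nonneg _ hpZ)
  have hElt : ∀ x : ℤ, E x < p := by
    intro x
    have h2 : x % (p : ℤ) < p := Int.emod_lt_of_pos _ (by exact_mod_cast hp0)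
    have h3 := hEcast x
    omega
  have hEmod : ∀ x : ℤ, ((E x : ℤ)) ≡ x [ZMOD p] := by
    intro x
    rw [hEcast]
    exact Int.emod_emod_of_dvd x dvd_rfl
  have hEzmod : ∀ x : ℤ, ((E x : ℕ) : ZMod p) = (x : ZMod p) := by
    intro x
    have : (((E x : ℤ)) : ZMod p) = (x : ZMod p) :=
      (ZMod.intCast_eq_intCast_iff _ _ _).mpr (hEmod x)
    simpa using this
  have hzpowE : ∀ n : ℤ, ζ ^ n = ζ ^ (E n) := by
    intro n
    have h1 : ζ ^ ((n % (p : ℤ))) = ζ ^ (E n) := by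
      rw [← zpow_natCast, hEcast]
    conv_lhs => rw [← Int.mul_ediv_add_emod n p]
    rw [zpow_add₀ hζ0, zpow_mul, zpow_natCast, hζ.pow_eq_one, one_zpow, one_mul, h1]
  have hexp : ∀ s t : ℤ, Complex.exp (2 * Real.pi * Complex.I * s * t / p)
      = ζ ^ (E (s * t)) := by
    intro s t
    have h1 : (2 * Real.pi * Complex.I * s * t / p : ℂ)
        = ((s * t : ℤ) : ℂ) * (2 * Real.pi * Complex.I / p) := by push_cast; ring
    rw [h1, Complex.exp_int_mul, ← hζdef, hzpowE]
  -- the ring A = Z[X]/(Φ_p)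
  have hcyc_monic : (Polynomial.cyclotomic p ℤ).Monic := Polynomial.cyclotomic.monic p ℤ
  have hcyc_irr : Irreducible (Polynomial.cyclotomic p ℤ) := Polynomial.cyclotomic.irreducible hp0
  have hcyc_prime : Prime (Polynomial.cyclotomic p ℤ) :=
    (UniqueFactorizationMonoid.irreducible_iff_prime).mp hcyc_irr
  letI A := AdjoinRoot (Polynomial.cyclotomic p ℤ)
  haveI : IsDomain A := by
    show IsDomain (Polynomial ℤ ⧸ Ideal.span {Polynomial.cyclotomic p ℤ})
    haveI : (Ideal.span {Polynomial.cyclotomic p ℤ}).IsPrime :=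
      (Ideal.span_singleton_prime hcyc_prime.ne_zero).mpr hcyc_prime
    exact Ideal.Quotient.isDomain _
  -- the evaluation map φ : A → ℂ at ζ
  have hroot : (Polynomial.cyclotomic p ℤ).eval₂ (Int.castRingHom ℂ) ζ = 0 := by
    rw [Polynomial.eval₂_eq_eval_map, Polynomial.map_cyclotomic]
    exact hζ.isRoot_cyclotomic hp0
  set φ : A →+* ℂ := AdjoinRoot.lift (Int.castRingHom ℂ) ζ hroot with hφdef
  have hφinj : Function.Injective φ := by
    rw [injective_iff_map_eq_zero]
    intro x hx
    obtain ⟨g, rfl⟩ := AdjoinRoot.mk_surjective x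
    rw [hφdef, AdjoinRoot.lift_mk] at hx
    rw [AdjoinRoot.mk_eq_zero, Polynomial.cyclotomic_eq_minpoly hζ hp0]
    apply minpoly.isIntegrallyClosed_dvd (hζ.isIntegral hp0)
    rwa [Polynomial.aeval_def, algebraMap_int_eq]
  set z : A := AdjoinRoot.root _ with hzdef
  have hφz : φ z = ζ := AdjoinRoot.lift_root hroot
  have hzp : z ^ p = 1 := hφinj (by rw [map_pow, hφz, map_one, hζ.pow_eq_one])
  have hζ1 : ζ ≠ 1 := hζ.ne_one hp1
  have h1z : (1 : A) - z ≠ 0 := by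
    intro h
    apply hζ1
    have h2 := congrArg φ h
    rw [map_sub, map_one, hφz, map_zero, sub_eq_zero] at h2
    exact h2.symm
  -- the reduction map ψ : A → ZMod p at 1
  have hone : (Polynomial.cyclotomic p ℤ).eval₂ (Int.castRingHom (ZMod p)) 1 = 0 := by
    rw [Polynomial.eval₂_at_one, Polynomial.eval_one_cyclotomic_prime]
    simp
  set ψ : A →+* ZMod p := AdjoinRoot.lift (Int.castRingHom (ZMod p)) 1 hone with hψdef
  have hψz : ψ z = 1 := AdjoinRoot.lift_root hone
  have hmkX : (AdjoinRoot.mk (Polynomial.cyclotomic p ℤ)) Polynomial.X = z := rfl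
  -- (1 - z) divides p in A
  have hpdvd : (1 - z) ∣ ((p : ℕ) : A) := by
    have h1 : (Polynomial.X - Polynomial.C (1 : ℤ))
        ∣ (Polynomial.cyclotomic p ℤ) - Polynomial.C ((Polynomial.cyclotomic p ℤ).eval 1) :=
      Polynomial.X_sub_C_dvd_sub_C_eval
    have h2 := map_dvd (AdjoinRoot.mk (Polynomial.cyclotomic p ℤ)) h1
    rw [Polynomial.eval_one_cyclotomic_prime, map_sub, map_sub, AdjoinRoot.mk_self, hmkX,
      zero_sub] at h2
    have hC1 : (AdjoinRoot.mk (Polynomial.cyclotomic p ℤ)) (Polynomial.C 1) = 1 := by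
      simp
    have hCp : (AdjoinRoot.mk (Polynomial.cyclotomic p ℤ)) (Polynomial.C ((p : ℕ) : ℤ)) =
        ((p : ℕ) : A) := by
      rw [AdjoinRoot.mk_C]
      push_cast
      rfl
    rw [hC1, hCp] at h2
    have h3 : (z - 1) ∣ ((p : ℕ) : A) := (dvd_neg).mp h2
    rwa [show ((1 : A) - z) = -(z - 1) by ring, neg_dvd]
  -- kernel of ψ is contained in (1 - z)
  have hker : ∀ x : A, ψ x = 0 → (1 - z) ∣ x := by
    intro x hx
    obtain ⟨g, rfl⟩ := AdjoinRoot.mk_surjective x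
    rw [hψdef, AdjoinRoot.lift_mk, Polynomial.eval₂_at_one] at hx
    have hdvd1 : ((p : ℕ) : ℤ) ∣ g.eval 1 := by
      have hx' : ((g.eval 1 : ℤ) : ZMod p) = 0 := hx
      rwa [ZMod.intCast_zmod_eq_zero_iff_dvd] at hx'
    obtain ⟨t, ht⟩ := hdvd1
    have h1 : (Polynomial.X - Polynomial.C (1 : ℤ)) ∣ g - Polynomial.C (g.eval 1) :=
      Polynomial.X_sub_C_dvd_sub_C_eval
    have h2 := map_dvd (AdjoinRoot.mk (Polynomial.cyclotomic p ℤ)) h1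
    rw [map_sub, map_sub, hmkX, map_one] at h2
    have h3 : (1 - z) ∣ (AdjoinRoot.mk (Polynomial.cyclotomic p ℤ) g
        - AdjoinRoot.mk (Polynomial.cyclotomic p ℤ) (Polynomial.C (g.eval 1))) := by
      rwa [show ((1 : A) - z) = -(z - 1) by ring, neg_dvd]
    have h4 : (1 - z) ∣ (AdjoinRoot.mk (Polynomial.cyclotomic p ℤ)) (Polynomial.C (g.eval 1)) := by
      have hCeq : (AdjoinRoot.mk (Polynomial.cyclotomic p ℤ)) (Polynomial.C (g.eval 1)) =
          ((p : ℕ) : A) * ((t : ℤ) : A) := by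
        rw [ht, map_mul, map_mul, AdjoinRoot.mk_C, AdjoinRoot.mk_C]
        push_cast
        rfl
      rw [hCeq]
      exact hpdvd.mul_right _
    simpa using dvd_add h3 h4
  -- transfer the vanishing determinant to A
  intro hdet
  set N : Matrix ι ι A := Matrix.of fun i j => z ^ (E (a i * b j)) with hNdef
  have hφN : ∀ i j, φ (N i j) = Complex.exp (2 * Real.pi * Complex.I * (a i) * (b j) / p) := by
    intro i j
    rw [hNdef, Matrix.of_apply, map_pow, hφz, hexp]
  have hdetN : N.det = 0 := by
    apply hφinj
    rw [map_zero, RingHom.map_det]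
    have hNmap : N.map (⇑φ) = fun i j : ι =>
        Complex.exp (2 * Real.pi * Complex.I * (a i) * (b j) / p) := by
      funext i j
      exact hφN i j
    rw [show φ.mapMatrix N = N.map ⇑φ from rfl, hNmap]
    exact hdet
  obtain ⟨v, hv0, hvN⟩ := Matrix.exists_mulVec_eq_zero_iff.mpr hdetN
  set m : ℕ := Fintype.card ι with hm
  -- the key step: any kernel vector has all entries divisible by 1 - z
  have hstep : ∀ w : ι → A, N.mulVec w = 0 → ∀ j, (1 - z) ∣ w j := by
    intro w hw j
    set Q : Polynomial A := ∑ j : ι, Polynomial.C (w j) * Polynomial.X ^ (E (b j)) with hQdef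
    have hβinj : Function.Injective fun j : ι => E (b j) := by
      intro s t hst
      have hst' : E (b s) = E (b t) := hst
      apply hb
      show ((b s : ZMod p)) = ((b t : ZMod p))
      rw [← hEzmod (b s), ← hEzmod (b t), hst']
    have hcoeff : ∀ j : ι, Q.coeff (E (b j)) = w j := by
      intro t
      rw [hQdef, Polynomial.finset_sum_coeff]
      rw [Finset.sum_eq_single t]
      · simp
      · intro s _ hs
        simp [Polynomial.coeff_X_pow, hβinj.ne hs, hβinj.ne (Ne.symm hs)]
      · simp
    by_cases hQ0 : Q = 0
    · have : w j = 0 := by rw [← hcoeff j, hQ0, Polynomial.coeff_zero]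
      simp [this]
    · -- Q vanishes at the m distinct points z ^ E (a i)
      have hQeval : ∀ i : ι, Q.eval (z ^ (E (a i))) = 0 := by
        intro i
        have hwi := congrFun hw i
        simp only [Matrix.mulVec, dotProduct, Pi.zero_apply] at hwi
        rw [hQdef, Polynomial.eval_finset_sum]
        simp only [Polynomial.eval_mul, Polynomial.eval_C, Polynomial.eval_pow,
          Polynomial.eval_X]
        rw [← hwi]
        refine Finset.sum_congr rfl fun t _ => ?_
        rw [← pow_mul]
        rw [show z ^ (E (a i) * E (b t)) = z ^ (E (a i * b t)) from
          pow_eq_pow_of_modEq_cyc hzp (by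
            rw [← Int.natCast_modEq_iff]
            push_cast
            exact ((hEmod (a i)).mul (hEmod (b t))).trans (hEmod (a i * b t)).symm)]
        rw [hNdef, Matrix.of_apply, mul_comm]
      have hρinj : Function.Injective fun i : ι => z ^ (E (a i)) := by
        intro s t hst
        have hst' : z ^ (E (a s)) = z ^ (E (a t)) := hst
        apply ha
        have h1 : ζ ^ (E (a s)) = ζ ^ (E (a t)) := by
          rw [← hφz, ← map_pow, ← map_pow, hst']
        have h2 := hζ.pow_inj (hElt _) (hElt _) h1
        show ((a s : ZMod p)) = ((a t : ZMod p))
        rw [← hEzmod (a s), ← hEzmod (a t), h2]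
      have hS : (Multiset.map (fun i : ι => z ^ (E (a i))) Finset.univ.val) ≤ Q.roots := by
        rw [Multiset.le_iff_subset (Multiset.Nodup.map hρinj Finset.univ.nodup)]
        intro x hx
        obtain ⟨i, _, rfl⟩ := Multiset.mem_map.mp hx
        exact Polynomial.mem_roots'.mpr ⟨hQ0, hQeval i⟩
      obtain ⟨P, hQP⟩ := (Multiset.prod_X_sub_C_dvd_iff_le_roots hQ0 _).mpr hS
      -- reduce mod (1 - z) : map by ψ
      set c : ι → ZMod p := fun j => ψ (w j) with hcdef
      have hQmap : Q.map ψ = ∑ j : ι, Polynomial.C (c j) * Polynomial.X ^ (E (b j)) := by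
        rw [hQdef, Polynomial.map_sum]
        refine Finset.sum_congr rfl fun t _ => ?_
        rw [Polynomial.map_mul, Polynomial.map_C, Polynomial.map_pow, Polynomial.map_X]
      have hdvdm : (Polynomial.X - 1 : Polynomial (ZMod p)) ^ m ∣ Q.map ψ := by
        refine ⟨P.map ψ, ?_⟩
        have hmap := congrArg (Polynomial.map (ψ : A →+* ZMod p)) hQP
        rw [Polynomial.map_mul] at hmap
        rw [hmap]
        congr 1
        rw [← Polynomial.coe_mapRingHom, map_multiset_prod, Multiset.map_map, Multiset.map_map]
        have hconst : ∀ i : ι,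
            (((Polynomial.mapRingHom (ψ : A →+* ZMod p)) ∘ (fun a => Polynomial.X - Polynomial.C a))
              ∘ (fun i : ι => z ^ (E (a i)))) i = Polynomial.X - 1 := by
          intro i
          show Polynomial.map ψ (Polynomial.X - Polynomial.C (z ^ E (a i))) = _
          rw [Polynomial.map_sub, Polynomial.map_X, Polynomial.map_C, map_pow, hψz, one_pow,
            Polynomial.C_1]
        rw [Multiset.map_congr rfl (fun i _ => hconst i), Multiset.map_const',
          Multiset.prod_replicate]
        rfl
      -- coefficients of derivative equations
      set βc : ι → ZMod p := fun j => ((E (b j) : ℕ) : ZMod p) with hβcdef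
      have heqs : ∀ t : ℕ, t < m → ∑ j : ι, c j * (βc j) ^ t = 0 := by
        intro t htm
        have h1 := dot_iter_dvd (Q.map ψ) m t (le_of_lt htm) hdvdm
        have h2 : (Polynomial.X - 1 : Polynomial (ZMod p)) ∣
            (fun g => Polynomial.X * Polynomial.derivative g)^[t] (Q.map ψ) :=
          dvd_trans (dvd_pow_self _ (by omega)) h1
        obtain ⟨g, hg⟩ := h2
        have h3 : ((fun g => Polynomial.X * Polynomial.derivative g)^[t] (Q.map ψ)).eval 1 = 0 := by
          rw [hg]
          simp
        rw [hQmap, dot_iter_sum] at h3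
        rw [Polynomial.eval_finset_sum] at h3
        simpa using h3
      -- Vandermonde: all c j vanish
      have hβcinj : Function.Injective βc := by
        intro s t hst
        have hst' : ((E (b s) : ℕ) : ZMod p) = ((E (b t) : ℕ) : ZMod p) := hst
        apply hb
        show ((b s : ZMod p)) = ((b t : ZMod p))
        rw [← hEzmod (b s), ← hEzmod (b t)]
        exact hst'
      have hc0 : ∀ j, c j = 0 := by
        by_contra hc
        push_neg at hc
        obtain ⟨j0, hj0⟩ := hc
        set en : ι ≃ Fin m := Fintype.equivFin ι with hendef
        set V : Matrix ι ι (ZMod p) := Matrix.of fun s t => (βc t) ^ ((en s : ℕ)) with hVdef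
        have hdetV : V.det ≠ 0 := by
          have hVeq : V = ((Matrix.vandermonde (fun i : Fin m => βc (en.symm i))).transpose).submatrix en en := by
            ext s t
            simp [hVdef, Matrix.vandermonde, Matrix.submatrix, Matrix.transpose_apply]
          rw [hVeq, Matrix.det_submatrix_equiv_self, Matrix.det_transpose,
            Matrix.det_vandermonde]
          apply Finset.prod_ne_zero_iff.mpr
          intro i _
          apply Finset.prod_ne_zero_iff.mpr
          intro j hj
          rw [Finset.mem_Ioi] at hj
          exact sub_ne_zero.mpr fun h => (ne_of_gt hj)
            (en.symm.injective (hβcinj h))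
        apply hdetV
        rw [← Matrix.exists_mulVec_eq_zero_iff]
        refine ⟨c, fun h => hj0 (congrFun h j0), ?_⟩
        funext s
        simp only [Matrix.mulVec, dotProduct, Pi.zero_apply, hVdef, Matrix.of_apply]
        rw [show ∑ t : ι, (βc t) ^ ((en s : ℕ)) * c t = ∑ t : ι, c t * (βc t) ^ ((en s : ℕ))
          from Finset.sum_congr rfl fun t _ => mul_comm _ _]
        exact heqs (en s : ℕ) (en s).isLt
      exact hker _ (hc0 j)
  -- descent: entries of v are divisible by every power of (1 - z)
  have hiter : ∀ n : ℕ, ∀ w : ι → A, N.mulVec w = 0 → ∀ j, (1 - z) ^ n ∣ w j := by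
    intro n
    induction n with
    | zero => intro w _ j; simpa using (one_dvd _)
    | succ n ih =>
      intro w hw j
      have h1 : ∀ j, ∃ u : A, w j = (1 - z) * u := fun j => hstep w hw j
      choose u hu using h1
      have hwu : N.mulVec u = 0 := by
        funext i
        have hwi := congrFun hw i
        simp only [Matrix.mulVec, dotProduct, Pi.zero_apply] at hwi ⊢
        have h2 : (1 - z) * ∑ t : ι, N i t * u t = 0 := by
          rw [Finset.mul_sum, ← hwi]
          refine Finset.sum_congr rfl fun t _ => ?_
          rw [hu t]
          ring
        rcases mul_eq_zero.mp h2 with h | h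
        · exact absurd h h1z
        · exact h
      have h3 := ih u hwu j
      rw [hu j, pow_succ']
      exact mul_dvd_mul_left _ h3
  -- (1 - z)^p = p * s for some s
  obtain ⟨s0, hs0⟩ := Commute.exists_add_pow_prime_eq hp (Commute.all (1 : A) (-z))
  obtain ⟨s, hs⟩ : ∃ s : A, ((1 : A) + -z) ^ p = 1 ^ p + (-z) ^ p + (p : A) * s :=
    ⟨1 * -z * s0, by rw [hs0]; ring⟩
  have hnegz : (-z) ^ p = -1 := by
    rw [hodd.neg_pow, hzp]
  have hozp : ((1 : A) - z) ^ p = (p : A) * s := by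
    rw [sub_eq_add_neg, hs, hnegz, one_pow]
    ring
  -- conclude: the coordinates of v j0 are divisible by arbitrary powers of p
  obtain ⟨j0, hj0⟩ := Function.ne_iff.mp hv0
  have hpn : ∀ n : ℕ, ((p : A)) ^ n ∣ v j0 := by
    intro n
    have h1 := hiter (p * n) v hvN j0
    have h2 : ((1 : A) - z) ^ (p * n) = ((p : A) * s) ^ n := by
      rw [pow_mul, hozp]
    rw [h2, mul_pow] at h1
    exact (dvd_mul_right _ _).trans h1
  set pb : PowerBasis ℤ A := AdjoinRoot.powerBasis' hcyc_monic with hpbdef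
  set B := pb.basis with hBdef
  have hrepr0 : B.repr (v j0) ≠ 0 := by
    intro h
    apply hj0
    have := B.repr.injective (by rw [h, map_zero] : B.repr (v j0) = B.repr 0)
    exact this
  obtain ⟨i0, hi0⟩ := Finsupp.ne_iff.mp hrepr0
  rw [Finsupp.coe_zero, Pi.zero_apply] at hi0
  set C0 : ℤ := B.repr (v j0) i0 with hC0def
  have hdvdC0 : ∀ n : ℕ, ((p : ℤ)) ^ n ∣ C0 := by
    intro n
    obtain ⟨d, hd⟩ := hpn n
    have h1 : v j0 = (((p : ℤ) ^ n : ℤ)) • d := by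
      rw [zsmul_eq_mul, hd]
      push_cast
      ring
    refine ⟨B.repr d i0, ?_⟩
    rw [hC0def, h1, map_smul, Finsupp.smul_apply, smul_eq_mul]
  have habs : ∀ n : ℕ, ((p : ℤ)) ^ n ≤ |C0| := by
    intro n
    exact Int.le_of_dvd (abs_pos.mpr hi0) ((dvd_abs _ _).mpr (hdvdC0 n))
  have hfin : (C0.natAbs : ℤ) < ((p : ℤ)) ^ C0.natAbs := by
    have h1 : C0.natAbs < p ^ C0.natAbs := Nat.lt_pow_self hp1
    exact_mod_cast h1
  have h2 := habs C0.natAbs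
  rw [Int.abs_eq_natAbs] at h2
  omega

private lemma symm_inj (p r k : ℕ) (h2r : 2 * r < p) (J : Fin k → Fin r)
    (hJ : Function.Injective J) :
    Function.Injective fun s : Fin k ⊕ Fin k =>
      (((Sum.elim (fun i : Fin k => ((J i : ℕ) + 1 : ℤ))
          (fun i : Fin k => -((J i : ℕ) + 1 : ℤ)) s : ℤ)) : ZMod p) := by
  intro s t hst
  set x : Fin k ⊕ Fin k → ℤ := Sum.elim (fun i : Fin k => ((J i : ℕ) + 1 : ℤ))
    (fun i : Fin k => -((J i : ℕ) + 1 : ℤ)) with hxdef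
  have hst' : ((x s : ZMod p)) = ((x t : ZMod p)) := hst
  have hbound : ∀ u : Fin k ⊕ Fin k, 1 ≤ |x u| ∧ |x u| ≤ r := by
    intro u
    rcases u with i | i
    · have h1 := (J i).isLt
      simp only [hxdef, Sum.elim_inl]
      rw [_root_.abs_of_nonneg (show (0:ℤ) ≤ ((J i : ℕ) : ℤ) + 1 by positivity)]
      omega
    · have h1 := (J i).isLt
      simp only [hxdef, Sum.elim_inr]
      rw [_root_.abs_of_nonpos (show -(((J i : ℕ) : ℤ) + 1) ≤ 0 by omega)]
      omega
  have hdvd : ((p : ℤ)) ∣ x s - x t := by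
    rw [ZMod.intCast_eq_intCast_iff] at hst'
    exact (Int.ModEq.dvd hst'.symm)
  have h0 : x s - x t = 0 := by
    apply Int.eq_zero_of_abs_lt_dvd hdvd
    have h1 := (hbound s).2
    have h2 := (hbound t).2
    have h3 := abs_sub_abs_le_abs_sub (x s) (x t)
    have h4 := abs_sub (x s) (x t)
    have : |x s - x t| ≤ |x s| + |x t| := by
      calc |x s - x t| = |x s + -(x t)| := by rw [sub_eq_add_neg]
        _ ≤ |x s| + |-(x t)| := abs_add_le _ _
        _ = |x s| + |x t| := by rw [abs_neg]
    omega
  have hxy : x s = x t := by omega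
  rcases s with i | i <;> rcases t with j | j
  · have : ((J i : ℕ) : ℤ) = ((J j : ℕ) : ℤ) := by
      have := hxy
      simp only [hxdef, Sum.elim_inl] at this
      omega
    have : J i = J j := Fin.ext (by exact_mod_cast this)
    rw [hJ this]
  · exfalso
    simp only [hxdef, Sum.elim_inl, Sum.elim_inr] at hxy
    omega
  · exfalso
    simp only [hxdef, Sum.elim_inl, Sum.elim_inr] at hxy
    omega
  · have : ((J i : ℕ) : ℤ) = ((J j : ℕ) : ℤ) := by
      have := hxy
      simp only [hxdef, Sum.elim_inr] at this
      omega
    have : J i = J j := Fin.ext (by exact_mod_cast this)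
    rw [hJ this]

/-- A vanishing minor of the cosine matrix `C = (2cos(2πkj/p))` would force the
corresponding symmetrized minor of the complex Fourier matrix to vanish;
consequently all minors of `C` are nonzero. -/
theorem cosine_matrix_minors_nonzero
    (p : ℕ) (hp : p.Prime) (hodd : Odd p)
    (r : ℕ) (hr : r = (p - 1) / 2)
    (k : ℕ) (J K : Fin k → Fin r)
    (hJ : Function.Injective J) (hK : Function.Injective K) :
    ((Matrix.det (fun i j : Fin k =>
        (2 : ℝ) * Real.cos (2 * Real.pi * ((J i : ℕ) + 1) * ((K j : ℕ) + 1) / p)) = 0 →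
      Matrix.det (fun a b : Fin k ⊕ Fin k =>
        Complex.exp (2 * Real.pi * Complex.I
          * (Sum.elim (fun i : Fin k => ((J i : ℕ) + 1 : ℤ))
              (fun i : Fin k => -((J i : ℕ) + 1 : ℤ)) a)
          * (Sum.elim (fun j : Fin k => ((K j : ℕ) + 1 : ℤ))
              (fun j : Fin k => -((K j : ℕ) + 1 : ℤ)) b) / p)) = 0)
      ∧ Matrix.det (fun i j : Fin k =>
        (2 : ℝ) * Real.cos (2 * Real.pi * ((J i : ℕ) + 1) * ((K j : ℕ) + 1) / p)) ≠ 0) := by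
  have h2r : 2 * r < p := by
    obtain ⟨t, ht⟩ := hodd
    omega
  set a : Fin k ⊕ Fin k → ℤ := Sum.elim (fun i : Fin k => ((J i : ℕ) + 1 : ℤ))
    (fun i : Fin k => -((J i : ℕ) + 1 : ℤ)) with hadef
  set b : Fin k ⊕ Fin k → ℤ := Sum.elim (fun j : Fin k => ((K j : ℕ) + 1 : ℤ))
    (fun j : Fin k => -((K j : ℕ) + 1 : ℤ)) with hbdef
  have hainj : Function.Injective fun s => ((a s : ZMod p)) := symm_inj p r k h2r J hJ
  have hbinj : Function.Injective fun s => ((b s : ZMod p)) := symm_inj p r k h2r K hK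
  have hCheb := cheb_minor_ne_zero p hp hodd a b hainj hbinj
  -- the factorization argument
  have hC : Matrix.det (fun i j : Fin k =>
      (2 : ℝ) * Real.cos (2 * Real.pi * ((J i : ℕ) + 1) * ((K j : ℕ) + 1) / p)) ≠ 0 := by
    intro hdetC
    apply hCheb
    -- real θ values
    set θ : Fin k → Fin k → ℝ :=
      fun i j => 2 * Real.pi * ((J i : ℕ) + 1) * ((K j : ℕ) + 1) / p with hθdef
    set Cc : Matrix (Fin k) (Fin k) ℂ :=
      Matrix.of fun i j => (((2 : ℝ) * Real.cos (θ i j) : ℝ) : ℂ) with hCcdef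
    have hCc : Cc.det = 0 := by
      have h1 := congrArg (Complex.ofRealHom) hdetC
      replace h1 := (RingHom.map_det Complex.ofRealHom _).symm.trans (h1.trans (map_zero _))
      rw [show Cc = Matrix.map (fun i j : Fin k =>
          (2 : ℝ) * Real.cos (2 * Real.pi * ((J i : ℕ) + 1) * ((K j : ℕ) + 1) / p))
            (⇑Complex.ofRealHom) from rfl]
      exact h1
    set M : Matrix (Fin k ⊕ Fin k) (Fin k ⊕ Fin k) ℂ := fun s t =>
        Complex.exp (2 * Real.pi * Complex.I * (a s) * (b t) / p) with hMdef
    set M11 : Matrix (Fin k) (Fin k) ℂ := Matrix.of fun i j =>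
      Complex.exp ((θ i j : ℂ) * Complex.I) with hM11def
    set M12 : Matrix (Fin k) (Fin k) ℂ := Matrix.of fun i j =>
      Complex.exp (-(θ i j : ℂ) * Complex.I) with hM12def
    set S : Matrix (Fin k) (Fin k) ℂ := Matrix.of fun i j =>
      2 * (Complex.exp ((θ i j : ℂ) * Complex.I)
          - Complex.exp (-(θ i j : ℂ) * Complex.I)) with hSdef
    have hMb : M = Matrix.fromBlocks M11 M12 M12 M11 := by
      ext s t
      rcases s with i | i <;> rcases t with j | j
      · show Complex.exp _ = Complex.exp _
        congr 1
        simp only [hθdef, hadef, hbdef, Sum.elim_inl, Sum.elim_inr]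
        push_cast
        ring
      · show Complex.exp _ = Complex.exp _
        congr 1
        simp only [hθdef, hadef, hbdef, Sum.elim_inl, Sum.elim_inr]
        push_cast
        ring
      · show Complex.exp _ = Complex.exp _
        congr 1
        simp only [hθdef, hadef, hbdef, Sum.elim_inl, Sum.elim_inr]
        push_cast
        ring
      · show Complex.exp _ = Complex.exp _
        congr 1
        simp only [hθdef, hadef, hbdef, Sum.elim_inl, Sum.elim_inr]
        push_cast
        ring
    set P : Matrix (Fin k ⊕ Fin k) (Fin k ⊕ Fin k) ℂ := Matrix.fromBlocks 1 1 1 (-1) with hPdef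
    have hPMP : P * M * P.transpose = Matrix.fromBlocks ((2 : ℂ) • Cc) 0 0 S := by
      rw [hMb, hPdef, Matrix.fromBlocks_transpose, Matrix.fromBlocks_multiply,
        Matrix.fromBlocks_multiply]
      rw [Matrix.fromBlocks_inj]
      refine ⟨?_, ?_, ?_, ?_⟩
      · simp only [Matrix.transpose_one, Matrix.mul_one, Matrix.one_mul]
        ext i j
        simp only [Matrix.add_apply, Matrix.smul_apply, Matrix.of_apply, hM11def, hM12def,
          hCcdef, smul_eq_mul]
        rw [Complex.ofReal_mul, Complex.ofReal_ofNat, Complex.ofReal_cos, Complex.two_cos]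
        ring
      · simp only [Matrix.transpose_one, Matrix.transpose_neg, Matrix.mul_one, Matrix.one_mul,
          Matrix.mul_neg]
        abel
      · simp only [Matrix.transpose_one, Matrix.mul_one, Matrix.one_mul, Matrix.neg_mul]
        abel
      · simp only [Matrix.transpose_one, Matrix.transpose_neg, Matrix.mul_one, Matrix.one_mul,
          Matrix.neg_mul, Matrix.mul_neg]
        ext i j
        simp only [Matrix.add_apply, Matrix.sub_apply, Matrix.neg_apply, Matrix.of_apply,
          hM11def, hM12def, hSdef]
        ring
    have hdetP : P.det ≠ 0 := by
      rw [hPdef, Matrix.det_fromBlocks_one₁₁]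
      have h1 : (-1 : Matrix (Fin k) (Fin k) ℂ) - 1 * 1 = (-2 : ℂ) • 1 := by
        ext i j
        by_cases h : i = j <;> simp [Matrix.one_apply, h] <;> norm_num
      rw [h1, Matrix.det_smul, Matrix.det_one, mul_one]
      exact pow_ne_zero _ (by norm_num)
    have hdetPMP := congrArg Matrix.det hPMP
    rw [Matrix.det_mul, Matrix.det_mul, Matrix.det_transpose,
      Matrix.det_fromBlocks_zero₂₁, Matrix.det_smul, hCc] at hdetPMP
    rw [mul_zero, zero_mul] at hdetPMP
    rcases mul_eq_zero.mp hdetPMP with h | h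
    · rcases mul_eq_zero.mp h with h' | h'
      · exact absurd h' hdetP
      · exact h'
    · exact absurd h hdetP
  exact ⟨fun h => absurd h hC, hC⟩
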